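/- Every solution a(t) of the dyadic system with a_j(0) ≥ 0 satisfies the energy inequality |a(t)|² ≤ |a(t₀)|² + 2∫_{t₀}^t (f, a(τ)) dτ for all 0 ≤ t₀ ≤ t, where |·| is the ℓ² norm and (f,a) = f₀ a₀. -/

import Mathlib

open Real Set MeasureTheory Finset Filter

noncomputable def lam : ℝ := (2:ℝ) ^ ((5:ℝ)/2)

/-- Right-hand side of the dyadic system: `da_j/dt = λ^{j-1} a_{j-1}² − λ^j a_j a_{j+1} + f_j`
with `a_{-1}=0`, forcing `f_0 > 0`, `f_j = 0` for `j ≥ 1`. -/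
noncomputable def dyadicRHS (f0 : ℝ) (a : ℕ → ℝ) : ℕ → ℝ
  | 0 => -(a 0 * a 1) + f0
  | (j+1) => lam ^ j * (a j)^2 - lam ^ (j+1) * a (j+1) * a (j+2)

/-- A weak (= classical) solution of the dyadic system on `[0,∞)`: an `ℓ²`-valued
function whose components are differentiable and satisfy the ODEs. -/
def IsDyadicSolution (f0 : ℝ) (a : ℝ → ℕ → ℝ) : Prop :=
  (∀ t ∈ Ici (0:ℝ), Summable (fun j => (a t j)^2)) ∧
  (∀ j, ∀ t ∈ Ici (0:ℝ), HasDerivWithinAt (fun s => a s j) (dyadicRHS f0 (a t) j) (Ici 0) t)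

lemma lam_pos : 0 < lam := by unfold lam; positivity

lemma dyadic_telescope (f0 : ℝ) (v : ℕ → ℝ) (N : ℕ) :
    ∑ j ∈ Finset.range (N+1), 2 * v j * dyadicRHS f0 v j
      = 2 * (f0 * v 0) - 2 * lam ^ N * (v N)^2 * v (N+1) := by
  induction N with
  | zero => simp [dyadicRHS]; ring
  | succ n ih =>
      rw [Finset.sum_range_succ, ih]
      show _ = 2 * (f0 * v 0) - 2 * lam ^ (n+1) * (v (n+1))^2 * v (n+2)
      have : dyadicRHS f0 v (n+1) = lam ^ n * (v n)^2 - lam ^ (n+1) * v (n+1) * v (n+2) := rfl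
      rw [this]; ring

lemma dyadic_nonneg (f0 : ℝ) (hf0 : 0 < f0) (a : ℝ → ℕ → ℝ)
    (ha : IsDyadicSolution f0 a) (h0 : ∀ j, 0 ≤ a 0 j) :
    ∀ j, ∀ t, 0 ≤ t → 0 ≤ a t j := by
  obtain ⟨-, hd⟩ := ha
  intro j t ht
  have hcont : ∀ k, ContinuousOn (fun s => a s k) (Ici 0) :=
    fun k s hs => (hd k s hs).continuousWithinAt
  set μ : ℝ := if j = 0 then 1 else lam ^ j with hμ
  -- continuous extension of the coefficient to all of ℝ
  set c : ℝ → ℝ := fun s => μ * a (max s 0) (j+1) with hc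
  have hccont : Continuous c := by
    apply continuous_const.mul
    exact (hcont (j+1)).comp_continuous (continuous_id.max continuous_const)
      (fun x => Set.mem_Ici.mpr (le_max_right _ _))
  set I : ℝ → ℝ := fun u => ∫ s in (0:ℝ)..u, c s with hI
  have hIderiv : ∀ u : ℝ, HasDerivAt I (c u) u := by
    intro u
    exact intervalIntegral.integral_hasDerivAt_right (hccont.intervalIntegrable _ _)
      (hccont.stronglyMeasurableAtFilter _ _) hccont.continuousAt
  set g : ℝ → ℝ := fun u => Real.exp (I u) * a u j with hg
  set G : ℝ → ℝ := fun u => Real.exp (I u) * c u * a u j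
      + Real.exp (I u) * dyadicRHS f0 (a u) j with hG
  have hgderiv : ∀ u ∈ Ici (0:ℝ), HasDerivWithinAt g (G u) (Ici 0) u := by
    intro u hu
    exact (((hIderiv u).hasDerivWithinAt.exp).mul (hd j u hu))
  have hGnn : ∀ u ∈ Ici (0:ℝ), 0 ≤ G u := by
    intro u hu
    have hmax : max u 0 = u := max_eq_left hu
    have : G u = Real.exp (I u) * (μ * a u (j+1) * a u j + dyadicRHS f0 (a u) j) := by
      simp only [hG, hc, hmax]; ring
    rw [this]
    apply mul_nonneg (Real.exp_nonneg _)
    match j with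
    | 0 =>
        have : μ = 1 := by simp [hμ]
        rw [this]
        show (0:ℝ) ≤ 1 * a u 1 * a u 0 + (-(a u 0 * a u 1) + f0)
        nlinarith
    | (k+1) =>
        have : μ = lam ^ (k+1) := by simp [hμ]
        rw [this]
        show (0:ℝ) ≤ lam ^ (k+1) * a u (k+2) * a u (k+1)
          + (lam ^ k * (a u k)^2 - lam ^ (k+1) * a u (k+1) * a u (k+2))
        have h1 : (0:ℝ) ≤ lam ^ k * (a u k)^2 :=
          mul_nonneg (pow_nonneg lam_pos.le _) (sq_nonneg _)
        nlinarith
  have hmono : MonotoneOn g (Ici 0) := by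
    apply monotoneOn_of_hasDerivWithinAt_nonneg (convex_Ici 0)
      (fun u hu => (hgderiv u hu).continuousWithinAt)
      (fun u hu => (hgderiv u (interior_subset hu)).mono interior_subset)
      (fun u hu => hGnn u (interior_subset hu))
  have h00 : (0:ℝ) ≤ g 0 := mul_nonneg (Real.exp_nonneg _) (h0 j)
  have hle : g 0 ≤ g t := hmono self_mem_Ici ht ht
  have hgt : 0 ≤ Real.exp (I t) * a t j := le_trans h00 hle
  by_contra hneg
  push_neg at hneg
  have : Real.exp (I t) * a t j < 0 := mul_neg_of_pos_of_neg (Real.exp_pos _) hneg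
  linarith

theorem energy_inequality (f0 : ℝ) (hf0 : 0 < f0) (a : ℝ → ℕ → ℝ)
    (ha : IsDyadicSolution f0 a) (h0 : ∀ j, 0 ≤ a 0 j) :
    ∀ t0 t : ℝ, 0 ≤ t0 → t0 ≤ t →
      ∑' j, (a t j)^2 ≤ ∑' j, (a t0 j)^2 + 2 * ∫ τ in t0..t, f0 * a τ 0 := by
  obtain ⟨hsum, hd⟩ := ha
  intro t0 t ht0 htt
  have ht : (0:ℝ) ≤ t := ht0.trans htt
  have hnn := dyadic_nonneg f0 hf0 a ⟨hsum, hd⟩ h0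
  have hcont : ∀ k, ContinuousOn (fun s => a s k) (Ici 0) :=
    fun k s hs => (hd k s hs).continuousWithinAt
  have hIccsub : Icc t0 t ⊆ Ici (0:ℝ) := fun x hx => le_trans ht0 hx.1
  have hφcont : ContinuousOn (fun τ => 2 * (f0 * a τ 0)) (Icc t0 t) :=
    continuousOn_const.mul (continuousOn_const.mul ((hcont 0).mono hIccsub))
  have hφint : IntegrableOn (fun τ => 2 * (f0 * a τ 0)) (Icc t0 t) :=
    hφcont.integrableOn_compact isCompact_Icc
  have key : ∀ N : ℕ, ∑ j ∈ Finset.range (N+1), (a t j)^2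
      ≤ ∑ j ∈ Finset.range (N+1), (a t0 j)^2 + ∫ τ in t0..t, 2 * (f0 * a τ 0) := by
    intro N
    have hSd : ∀ s ∈ Ici (0:ℝ),
        HasDerivWithinAt (fun u => ∑ j ∈ Finset.range (N+1), (a u j)^2)
          (∑ j ∈ Finset.range (N+1), 2 * a s j * dyadicRHS f0 (a s) j) (Ici 0) s := by
      intro s hs
      apply HasDerivWithinAt.fun_sum
      intro j _
      have h2 := (hd j s hs).fun_pow 2
      simpa [pow_one, mul_comm, mul_assoc, mul_left_comm] using h2
    have hbound := intervalIntegral.sub_le_integral_of_hasDeriv_right_of_le (g := fun u => ∑ j ∈ Finset.range (N+1), (a u j)^2)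
      (g' := fun s => ∑ j ∈ Finset.range (N+1), 2 * a s j * dyadicRHS f0 (a s) j)
      (φ := fun τ => 2 * (f0 * a τ 0)) htt
      (fun x hx => ((hSd x (hIccsub hx)).continuousWithinAt.mono hIccsub))
      (fun x hx => (hSd x (le_trans ht0 hx.1.le)).mono
        (fun y hy => le_trans (le_trans ht0 hx.1.le) hy.le))
      hφint
      (fun x hx => by
        have hx0 : (0:ℝ) ≤ x := le_trans ht0 hx.1.le
        rw [dyadic_telescope]
        have h1 : 0 ≤ 2 * lam ^ N * (a x N)^2 * a x (N+1) :=
          mul_nonneg (mul_nonneg (mul_nonneg (by norm_num) (pow_nonneg lam_pos.le _))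
            (sq_nonneg _)) (hnn (N+1) x hx0)
        linarith)
    linarith
  have hts : Tendsto (fun N : ℕ => ∑ j ∈ Finset.range (N+1), (a t j)^2) atTop
      (nhds (∑' j, (a t j)^2)) :=
    (hsum t ht).hasSum.tendsto_sum_nat.comp (tendsto_add_atTop_nat 1)
  have hC : ∀ N : ℕ, ∑ j ∈ Finset.range (N+1), (a t j)^2
      ≤ ∑' j, (a t0 j)^2 + 2 * ∫ τ in t0..t, f0 * a τ 0 := by
    intro N
    have h1 := key N
    have h2 : ∑ j ∈ Finset.range (N+1), (a t0 j)^2 ≤ ∑' j, (a t0 j)^2 :=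
      Summable.sum_le_tsum _ (fun j _ => sq_nonneg _) (hsum t0 ht0)
    have h3 : (∫ τ in t0..t, 2 * (f0 * a τ 0)) = 2 * ∫ τ in t0..t, f0 * a τ 0 :=
      intervalIntegral.integral_const_mul _ _
    linarith
  exact le_of_tendsto' hts hC
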